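/- Let P and Q be finite posets with E(uni_P; ddeg) = E(uni_Q; ddeg). If P and Q are both CDE then their disjoint union P + Q is also CDE. Similarly, if P and Q are both mCDE then P + Q is also mCDE. -/

import Mathlib

open scoped Classical

noncomputable section

namespace CDEPaper

/-- The down-degree of `p`: the number of elements that `p` covers, as a real number. -/
def ddeg {α : Type*} [PartialOrder α] (p : α) : ℝ :=
  (Nat.card {q : α // q ⋖ p} : ℝ)

/-- The expectation of the statistic `f` with respect to the weights `μ`. -/
def expect {α : Type*} (μ : α → ℝ) (f : α → ℝ) : ℝ :=
  ∑ᶠ p, μ p * f p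

/-- The uniform distribution on a finite type. -/
def uni (α : Type*) : α → ℝ :=
  fun _ => (Nat.card α : ℝ)⁻¹

/-- `μ` is a probability distribution. -/
def IsProbDist {α : Type*} (μ : α → ℝ) : Prop :=
  (∀ x, 0 ≤ μ x) ∧ (∑ᶠ x, μ x) = 1

/-- The `k`-chain distribution: each `p` gets probability proportional to the number of
`k`-chains (strictly increasing sequences `c₀ < c₁ < ⋯ < c_k`) passing through `p`. -/
def chainDist (α : Type*) [PartialOrder α] (k : ℕ) : α → ℝ := fun p =>
  (Nat.card {c : Fin (k + 1) → α // StrictMono c ∧ ∃ i, c i = p} : ℝ) /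
    (((k : ℝ) + 1) * (Nat.card {c : Fin (k + 1) → α // StrictMono c} : ℝ))

/-- The `m`-multichain distribution: each `p` gets probability proportional to the number of
`m`-multichains (weakly increasing sequences) passing through `p`. -/
def mchainDist (α : Type*) [PartialOrder α] (m : ℕ) : α → ℝ := fun p =>
  (Nat.card {c : Fin (m + 1) → α // Monotone c ∧ ∃ i, c i = p} : ℝ) /
    (Nat.card {cq : (Fin (m + 1) → α) × α // Monotone cq.1 ∧ ∃ i, cq.1 i = cq.2} : ℝ)

/-- The modified `m`-multichain distribution: each `p` gets probability proportional to the
number of pairs `(c, i)` where `c` is an `m`-multichain and `c i = p`. -/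
def mhatDist (α : Type*) [PartialOrder α] (m : ℕ) : α → ℝ := fun p =>
  (Nat.card {ci : (Fin (m + 1) → α) × Fin (m + 1) // Monotone ci.1 ∧ ci.1 ci.2 = p} : ℝ) /
    (((m : ℝ) + 1) * (Nat.card {c : Fin (m + 1) → α // Monotone c} : ℝ))

/-- The maximal chain distribution: each `p` gets probability proportional to the number of
maximal chains passing through `p`. -/
def maxchainDist (α : Type*) [PartialOrder α] : α → ℝ := fun p =>
  (Nat.card {C : Set α // IsMaxChain (· ≤ ·) C ∧ p ∈ C} : ℝ) /
    (Nat.card {Cq : Set α × α // IsMaxChain (· ≤ ·) Cq.1 ∧ Cq.2 ∈ Cq.1} : ℝ)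

/-- A poset has coincidental down-degree expectations (CDE). -/
def IsCDE (α : Type*) [PartialOrder α] : Prop :=
  expect (maxchainDist α) ddeg = expect (uni α) ddeg

/-- A poset is mCDE: the expected down-degree with respect to the `k`-chain distribution agrees
with the uniform expected down-degree for every `k = 0, 1, …, r` (i.e. every `k` for which a
`k`-chain exists). -/
def IsMCDE (α : Type*) [PartialOrder α] : Prop :=
  ∀ k : ℕ, (∃ c : Fin (k + 1) → α, StrictMono c) →
    expect (chainDist α k) ddeg = expect (uni α) ddeg

/-- The distributive lattice `J(P)` of order ideals (lower sets) of a poset, ordered by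
inclusion. -/
abbrev OIdeal (α : Type*) [PartialOrder α] : Type _ := {I : Set α // IsLowerSet I}

/-- The indicator statistic that `p` can be toggled into the order ideal `I`. -/
def Tplus {α : Type*} [PartialOrder α] (p : α) (I : OIdeal α) : ℝ :=
  if p ∉ I.1 ∧ IsLowerSet (I.1 ∪ {p}) then 1 else 0

/-- The indicator statistic that `p` can be toggled out of the order ideal `I`. -/
def Tminus {α : Type*} [PartialOrder α] (p : α) (I : OIdeal α) : ℝ :=
  if p ∈ I.1 ∧ IsLowerSet (I.1 \ {p}) then 1 else 0

/-- A distribution on `J(P)` is toggle-symmetric if for every `p` the probability that `p` can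
be toggled in equals the probability that `p` can be toggled out. -/
def ToggleSymmetric {α : Type*} [PartialOrder α] (μ : OIdeal α → ℝ) : Prop :=
  ∀ p : α, expect μ (Tplus p) = expect μ (Tminus p)

/-- `J(P)` is toggle-CDE (tCDE): every toggle-symmetric probability distribution has the same
expected down-degree as the uniform distribution. -/
def IsTCDE (α : Type*) [PartialOrder α] : Prop :=
  ∀ μ : OIdeal α → ℝ, IsProbDist μ → ToggleSymmetric μ →
    expect μ ddeg = expect (uni (OIdeal α)) ddeg

end CDEPaper
namespace CDEPaper

/-! ### Skew shapes and shifted shapes -/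

/-- The boxes of the skew shape `λ/ν` of height `a`, in matrix coordinates with 1-based rows
and columns: row `i` (for `1 ≤ i ≤ a`) consists of the boxes `[i,j]` with `ν i < j ≤ λ i`.
The poset structure is the one induced from the componentwise (product) order on `ℕ × ℕ`. -/
def skewCells (a : ℕ) (lam nu : ℕ → ℕ) : Set (ℕ × ℕ) :=
  {b | 1 ≤ b.1 ∧ b.1 ≤ a ∧ nu b.1 < b.2 ∧ b.2 ≤ lam b.1}

/-- The boxes of the shifted Young diagram of a strict partition `λ` of length `l`:
the boxes `[i,j]` with `1 ≤ i ≤ l` and `i ≤ j ≤ λ i + i - 1`.  The poset structure is the one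
induced from the componentwise (product) order on `ℕ × ℕ`. -/
def shiftCells (l : ℕ) (lam : ℕ → ℕ) : Set (ℕ × ℕ) :=
  {b | 1 ≤ b.1 ∧ b.1 ≤ l ∧ b.1 ≤ b.2 ∧ b.2 < lam b.1 + b.1}

/-- The shifted rook statistic `R^shift_{ij}` on order ideals of (the poset of) `S`. -/
def Rshift (S : Set (ℕ × ℕ)) (i j : ℕ) (I : OIdeal ↥S) : ℝ :=
  (∑ᶠ (q : ↥S), if (q : ℕ × ℕ).1 ≤ i ∧ (q : ℕ × ℕ).2 ≤ j then Tplus q I else 0)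
    + (∑ᶠ (q : ↥S), if i ≤ (q : ℕ × ℕ).1 ∧ j ≤ (q : ℕ × ℕ).2 then Tminus q I else 0)
    - (∑ᶠ (q : ↥S),
        if (q : ℕ × ℕ).1 < i ∧ (q : ℕ × ℕ).2 < j ∧ (q : ℕ × ℕ).1 < (q : ℕ × ℕ).2 then
          Tminus q I else 0)
    - (∑ᶠ (q : ↥S),
        if i < (q : ℕ × ℕ).1 ∧ j < (q : ℕ × ℕ).2 ∧ (q : ℕ × ℕ).1 < (q : ℕ × ℕ).2 then
          Tplus q I else 0)

/-- The shifted diagram of `λ` (of length `l`) has an outward corner indexed by `i'`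
(a north step followed by an east step on the southeast border, occurring at the lattice point
`(i', λ (i'+1) + i')`) if and only if `1 ≤ i' < l` and `λ i' ≥ λ (i'+1) + 2`. -/
def IsCorner (l : ℕ) (lam : ℕ → ℕ) (i' : ℕ) : Prop :=
  1 ≤ i' ∧ i' + 1 ≤ l ∧ lam (i' + 1) + 2 ≤ lam i'

/-- An order ideal `I ∈ J(P_λ^shift)` contains the outward corner indexed by `i'`
(i.e. the lattice path of `I` contains both steps of the corner):  equivalently, `I` contains
both the last box `[i'+1, λ(i'+1)+i']` of row `i'+1` and the box `[i', λ(i'+1)+i'+1]`. -/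
def ContainsCorner (l : ℕ) (lam : ℕ → ℕ) (I : OIdeal ↥(shiftCells l lam)) (i' : ℕ) : Prop :=
  (∃ q : ↥(shiftCells l lam), (q : ℕ × ℕ) = (i' + 1, lam (i' + 1) + i') ∧ q ∈ I.1) ∧
  (∃ q : ↥(shiftCells l lam), (q : ℕ × ℕ) = (i', lam (i' + 1) + i' + 1) ∧ q ∈ I.1)

/-- A (not necessarily strict) partition `ν` (with parts `ν 1 ≥ ν 2 ≥ ⋯`) which, viewed as a
straight shape, is balanced with height and width both equal to `k`:  it has exactly `k`
nonzero parts, its first part is `k`, and every outward corner of its boundary path (which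
occurs at the point `(i, ν (i+1))` whenever `ν i > ν (i+1)`) lies on the anti-diagonal
`i + j = k` of the `k × k` square. -/
def BalancedSquare (k : ℕ) (nu : ℕ → ℕ) : Prop :=
  (∀ i, 1 ≤ i → nu (i + 1) ≤ nu i) ∧
  (∀ i, 1 ≤ i → i ≤ k → 1 ≤ nu i) ∧
  (∀ i, k < i → nu i = 0) ∧
  nu 1 = k ∧
  (∀ i, 1 ≤ i → i + 1 ≤ k → nu (i + 1) < nu i → i + nu (i + 1) = k)

/-- The poset `P_{a,1,1,d}`: a bottom chain `w₁ < ⋯ < w_a`, two incomparable elements `x, y`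
covering `w_a`, and a top chain `z₁ < ⋯ < z_d` with `z₁` covering both `x` and `y`.
It is realized inside `ℕ × ℕ` (with the componentwise order) as
`w_i = (i,i)`, `x = (a+1, a)`, `y = (a, a+1)`, `z_j = (a+j, a+j)`. -/
def Pa11d (a d : ℕ) : Set (ℕ × ℕ) :=
  {p | (1 ≤ p.1 ∧ p.1 ≤ a ∧ p.2 = p.1) ∨ p = (a + 1, a) ∨ p = (a, a + 1) ∨
    (∃ j, 1 ≤ j ∧ j ≤ d ∧ p = (a + j, a + j))}

/-! ### Shifted set-valued tableaux

Letters of the primed alphabet `1 < 1' < 2 < 2' < ⋯` are encoded as natural numbers: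
the letter `m : ℕ` has value `m / 2 + 1` and is primed iff `m` is odd
(so `0 ↦ 1, 1 ↦ 1', 2 ↦ 2, 3 ↦ 2', …`); the order on letters is the usual order on `ℕ`. -/

/-- The value of a letter. -/
def letterVal (m : ℕ) : ℕ := m / 2 + 1

/-- `T` is a shifted set-valued tableau of shape given by the box set `S`:  each box gets a
finite nonempty set of letters, all entries of a box weakly precede all entries of any strictly
larger box, each unprimed letter appears at most once in each column, and each primed letter
appears at most once in each row. -/
def IsSSVT (S : Set (ℕ × ℕ)) (T : ↥S → Finset ℕ) : Prop :=
  (∀ u, (T u).Nonempty) ∧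
  (∀ u v : ↥S, u < v → ∀ x ∈ T u, ∀ y ∈ T v, x ≤ y) ∧
  (∀ u v : ↥S, u ≠ v → (u : ℕ × ℕ).2 = (v : ℕ × ℕ).2 →
    ∀ m : ℕ, m % 2 = 0 → ¬(m ∈ T u ∧ m ∈ T v)) ∧
  (∀ u v : ↥S, u ≠ v → (u : ℕ × ℕ).1 = (v : ℕ × ℕ).1 →
    ∀ m : ℕ, m % 2 = 1 → ¬(m ∈ T u ∧ m ∈ T v))

/-- `T` is standard: distinct entry occurrences have distinct values, and the values used are
exactly `1, 2, …, N` where `N` is the total number of entries. -/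
def IsStandardT (S : Set (ℕ × ℕ)) (T : ↥S → Finset ℕ) : Prop :=
  (∀ u v : ↥S, ∀ x ∈ T u, ∀ y ∈ T v, letterVal x = letterVal y → u = v ∧ x = y) ∧
  (∀ m : ℕ, 1 ≤ m → m ≤ ∑ᶠ (u : ↥S), (T u).card → ∃ u : ↥S, ∃ x ∈ T u, letterVal x = m)

/-- `T` is barely set-valued: exactly one box has two entries; all other boxes have one. -/
def IsBarelySetValued (S : Set (ℕ × ℕ)) (T : ↥S → Finset ℕ) : Prop :=
  ∃ u₀ : ↥S, (T u₀).card = 2 ∧ ∀ u : ↥S, u ≠ u₀ → (T u).card = 1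

/-- `T` is unprimed: no primed letters appear. -/
def IsUnprimed (S : Set (ℕ × ℕ)) (T : ↥S → Finset ℕ) : Prop :=
  ∀ u : ↥S, ∀ x ∈ T u, x % 2 = 0

/-- `g^λ`: the number of unprimed standard shifted tableaux of shape `λ`. -/
def gShift (l : ℕ) (lam : ℕ → ℕ) : ℕ :=
  Nat.card {T : ↥(shiftCells l lam) → Finset ℕ //
    IsSSVT (shiftCells l lam) T ∧ IsStandardT (shiftCells l lam) T ∧
    (∀ u, (T u).card = 1) ∧ IsUnprimed (shiftCells l lam) T}

/-- The number of standard shifted barely set-valued tableaux of shape `λ`. -/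
def numBarelySVT (l : ℕ) (lam : ℕ → ℕ) : ℕ :=
  Nat.card {T : ↥(shiftCells l lam) → Finset ℕ //
    IsSSVT (shiftCells l lam) T ∧ IsStandardT (shiftCells l lam) T ∧
    IsBarelySetValued (shiftCells l lam) T}

/-! ### Toggles, rowmotion, orbits -/

/-- The toggle `τ_p` on order ideals. -/
def toggle {α : Type*} [PartialOrder α] (p : α) (I : OIdeal α) : OIdeal α :=
  if h : p ∉ I.1 ∧ IsLowerSet (I.1 ∪ {p}) then ⟨I.1 ∪ {p}, h.2⟩
  else if h' : p ∈ I.1 ∧ IsLowerSet (I.1 \ {p}) then ⟨I.1 \ {p}, h'.2⟩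
  else I

/-- The composition of the toggles along a list, applied head first. -/
def applyToggles {α : Type*} [PartialOrder α] (L : List α) (I : OIdeal α) : OIdeal α :=
  L.foldl (fun J p => toggle p J) I

/-- The forward orbit of `x` under `Φ` (for invertible `Φ` on a finite set, the orbit). -/
def orbit {β : Type*} (Φ : β → β) (x : β) : Set β := {y | ∃ n : ℕ, Φ^[n] x = y}

/-- The probability distribution that is uniform on the orbit of `x` under `Φ` and zero
outside of it. -/
def orbitDist {β : Type*} (Φ : β → β) (x : β) : β → ℝ := fun y =>
  if y ∈ orbit Φ x then (Nat.card ↥(orbit Φ x) : ℝ)⁻¹ else 0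

/-- Rowmotion on order ideals: `I ↦ {x : x ≤ y for some minimal element y of P \ I}`. -/
def rowmotion {α : Type*} [PartialOrder α] (I : OIdeal α) : OIdeal α :=
  ⟨{x | ∃ y, (y ∉ I.1 ∧ ∀ z, z ∉ I.1 → z ≤ y → z = y) ∧ x ≤ y}, by
    intro a b hba ha
    obtain ⟨y, hy, hay⟩ := ha
    exact ⟨y, hy, le_trans hba hay⟩⟩

/-- The antichain cardinality statistic `I ↦ #max(I)`. -/
def antichainCard {α : Type*} [PartialOrder α] (I : OIdeal α) : ℝ :=
  (Nat.card {p : α // p ∈ I.1 ∧ ∀ q, q ∈ I.1 → p ≤ q → p = q} : ℝ)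

end CDEPaper

namespace CDEPaper


/-! ### Auxiliary lemmas for Statement 1 -/

set_option linter.unusedSectionVars false

section Statement1Aux

variable {α β : Type*} [PartialOrder α] [PartialOrder β]

lemma covBy_inl_iff {q : α ⊕ β} {a : α} : q ⋖ Sum.inl a ↔ ∃ b : α, q = Sum.inl b ∧ b ⋖ a := by
  constructor
  · rintro ⟨hlt, hmid⟩
    obtain (b | b) := q
    · refine ⟨b, rfl, Sum.inl_lt_inl_iff.1 hlt, fun c h1 h2 => ?_⟩
      exact hmid (Sum.inl_lt_inl_iff.2 h1) (Sum.inl_lt_inl_iff.2 h2)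
    · exact absurd hlt Sum.not_inr_lt_inl
  · rintro ⟨b, rfl, hlt, hmid⟩
    refine ⟨Sum.inl_lt_inl_iff.2 hlt, ?_⟩
    rintro (c | c) h1 h2
    · exact hmid (Sum.inl_lt_inl_iff.1 h1) (Sum.inl_lt_inl_iff.1 h2)
    · exact Sum.not_inl_lt_inr h1

lemma covBy_inr_iff {q : α ⊕ β} {a : β} : q ⋖ Sum.inr a ↔ ∃ b : β, q = Sum.inr b ∧ b ⋖ a := by
  constructor
  · rintro ⟨hlt, hmid⟩
    obtain (b | b) := q
    · exact absurd hlt Sum.not_inl_lt_inr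
    · refine ⟨b, rfl, Sum.inr_lt_inr_iff.1 hlt, fun c h1 h2 => ?_⟩
      exact hmid (Sum.inr_lt_inr_iff.2 h1) (Sum.inr_lt_inr_iff.2 h2)
  · rintro ⟨b, rfl, hlt, hmid⟩
    refine ⟨Sum.inr_lt_inr_iff.2 hlt, ?_⟩
    rintro (c | c) h1 h2
    · exact Sum.not_inr_lt_inl h1
    · exact hmid (Sum.inr_lt_inr_iff.1 h1) (Sum.inr_lt_inr_iff.1 h2)

lemma ddeg_inl (a : α) : ddeg (Sum.inl a : α ⊕ β) = ddeg a := by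
  unfold ddeg
  congr 1
  refine Nat.card_congr (Equiv.ofBijective
    (fun q : {q : α // q ⋖ a} => (⟨Sum.inl q.1, covBy_inl_iff.2 ⟨q.1, rfl, q.2⟩⟩ :
      {q : α ⊕ β // q ⋖ Sum.inl a})) ⟨?_, ?_⟩).symm
  · rintro ⟨x, hx⟩ ⟨y, hy⟩ hxy
    simpa using hxy
  · rintro ⟨q, hq⟩
    obtain ⟨b, rfl, hb⟩ := covBy_inl_iff.1 hq
    exact ⟨⟨b, hb⟩, rfl⟩

lemma ddeg_inr (b : β) : ddeg (Sum.inr b : α ⊕ β) = ddeg b := by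
  unfold ddeg
  congr 1
  refine Nat.card_congr (Equiv.ofBijective
    (fun q : {q : β // q ⋖ b} => (⟨Sum.inr q.1, covBy_inr_iff.2 ⟨q.1, rfl, q.2⟩⟩ :
      {q : α ⊕ β // q ⋖ Sum.inr b})) ⟨?_, ?_⟩).symm
  · rintro ⟨x, hx⟩ ⟨y, hy⟩ hxy
    simpa using hxy
  · rintro ⟨q, hq⟩
    obtain ⟨c, rfl, hc⟩ := covBy_inr_iff.1 hq
    exact ⟨⟨c, hc⟩, rfl⟩

lemma expect_div {γ : Type*} [Finite γ] (n : γ → ℝ) (D : ℝ) (f : γ → ℝ) :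
    expect (fun p => n p / D) f = (∑ᶠ p, n p * f p) / D := by
  have := Fintype.ofFinite γ
  simp only [expect, finsum_eq_sum_of_fintype, Finset.sum_div]
  exact Finset.sum_congr rfl (fun p _ => by ring)

lemma expect_uni_eq {γ : Type*} [Finite γ] (f : γ → ℝ) :
    expect (uni γ) f = (∑ᶠ p, f p) / (Nat.card γ : ℝ) := by
  have := Fintype.ofFinite γ
  simp only [expect, uni, finsum_eq_sum_of_fintype]
  rw [← Finset.mul_sum, inv_mul_eq_div]

lemma sum_ddeg_eq {γ : Type*} [Finite γ] [PartialOrder γ] :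
    (∑ᶠ p : γ, ddeg p) = (Nat.card γ : ℝ) * expect (uni γ) ddeg := by
  rcases isEmpty_or_nonempty γ with hc | hc
  · rw [finsum_of_isEmpty]
    simp
  · rw [expect_uni_eq]
    have h0 : (Nat.card γ : ℝ) ≠ 0 := Nat.cast_ne_zero.2 Nat.card_pos.ne'
    field_simp

lemma expect_isEmpty {γ : Type*} [IsEmpty γ] (μ f : γ → ℝ) : expect μ f = 0 :=
  finsum_of_isEmpty _

/-- Splitting a `finsum` over a sum type. -/
lemma finsum_sum_split {γ δ : Type*} [Finite γ] [Finite δ] (f : γ ⊕ δ → ℝ) :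
    (∑ᶠ p : γ ⊕ δ, f p) = (∑ᶠ a : γ, f (Sum.inl a)) + (∑ᶠ b : δ, f (Sum.inr b)) := by
  have := Fintype.ofFinite γ
  have := Fintype.ofFinite δ
  simp [finsum_eq_sum_of_fintype, Fintype.sum_sum_type]

lemma mix_eq {Sa Sb Na Nb e : ℝ} (ha : Sa = Na * e) (hb : Sb = Nb * e) (hN : Na + Nb ≠ 0) :
    (Sa + Sb) / (Na + Nb) = e := by
  subst ha; subst hb
  rw [div_eq_iff hN]; ring

/-! #### Chains in a disjoint union -/

lemma strictMono_sum_cases {k : ℕ} {c : Fin (k + 1) → α ⊕ β} (hc : StrictMono c) :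
    (∃ d : Fin (k + 1) → α, c = Sum.inl ∘ d) ∨ (∃ d : Fin (k + 1) → β, c = Sum.inr ∘ d) := by
  rcases h0 : c 0 with a | b
  · left
    have hall : ∀ i, ∃ x, c i = Sum.inl x := by
      intro i
      have hle : c 0 ≤ c i := hc.monotone (Fin.zero_le i)
      rw [h0] at hle
      rcases hi : c i with x | x
      · exact ⟨x, rfl⟩
      · rw [hi] at hle; exact absurd hle Sum.not_inl_le_inr
    exact ⟨fun i => (hall i).choose, funext fun i => (hall i).choose_spec⟩
  · right
    have hall : ∀ i, ∃ x, c i = Sum.inr x := by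
      intro i
      have hle : c 0 ≤ c i := hc.monotone (Fin.zero_le i)
      rw [h0] at hle
      rcases hi : c i with x | x
      · rw [hi] at hle; exact absurd hle Sum.not_inr_le_inl
      · exact ⟨x, rfl⟩
    exact ⟨fun i => (hall i).choose, funext fun i => (hall i).choose_spec⟩

lemma strictMono_of_inl_comp {k : ℕ} {d : Fin (k + 1) → α}
    (h : StrictMono (Sum.inl ∘ d : Fin (k + 1) → α ⊕ β)) : StrictMono d :=
  fun _ _ hij => Sum.inl_lt_inl_iff.1 (h hij)

lemma strictMono_of_inr_comp {k : ℕ} {d : Fin (k + 1) → β}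
    (h : StrictMono (Sum.inr ∘ d : Fin (k + 1) → α ⊕ β)) : StrictMono d :=
  fun _ _ hij => Sum.inr_lt_inr_iff.1 (h hij)

lemma card_chains_sum [Finite α] [Finite β] (k : ℕ) :
    Nat.card {c : Fin (k + 1) → α ⊕ β // StrictMono c}
      = Nat.card {c : Fin (k + 1) → α // StrictMono c}
        + Nat.card {c : Fin (k + 1) → β // StrictMono c} := by
  rw [← Nat.card_sum]
  refine (Nat.card_congr (Equiv.ofBijective
    (Sum.elim
      (fun c : {c : Fin (k + 1) → α // StrictMono c} =>
        (⟨Sum.inl ∘ c.1, Sum.inl_strictMono.comp c.2⟩ :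
          {c : Fin (k + 1) → α ⊕ β // StrictMono c}))
      (fun c : {c : Fin (k + 1) → β // StrictMono c} =>
        (⟨Sum.inr ∘ c.1, Sum.inr_strictMono.comp c.2⟩ :
          {c : Fin (k + 1) → α ⊕ β // StrictMono c})))
    ⟨?_, ?_⟩)).symm
  · rintro (⟨c, hc⟩ | ⟨c, hc⟩) (⟨c', hc'⟩ | ⟨c', hc'⟩) hcc <;>
      simp only [Sum.elim_inl, Sum.elim_inr, Subtype.mk.injEq] at hcc
    · exact congrArg Sum.inl (Subtype.ext (funext fun i => Sum.inl_injective (congrFun hcc i)))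
    · exact absurd (congrFun hcc 0) (by simp)
    · exact absurd (congrFun hcc 0) (by simp)
    · exact congrArg Sum.inr (Subtype.ext (funext fun i => Sum.inr_injective (congrFun hcc i)))
  · rintro ⟨c, hc⟩
    rcases strictMono_sum_cases hc with ⟨d, rfl⟩ | ⟨d, rfl⟩
    · exact ⟨Sum.inl ⟨d, strictMono_of_inl_comp hc⟩, rfl⟩
    · exact ⟨Sum.inr ⟨d, strictMono_of_inr_comp hc⟩, rfl⟩

lemma card_chains_through_inl (k : ℕ) (a : α) :
    Nat.card {c : Fin (k + 1) → α ⊕ β // StrictMono c ∧ ∃ i, c i = Sum.inl a}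
      = Nat.card {c : Fin (k + 1) → α // StrictMono c ∧ ∃ i, c i = a} := by
  refine (Nat.card_congr (Equiv.ofBijective
    (fun c : {c : Fin (k + 1) → α // StrictMono c ∧ ∃ i, c i = a} =>
      (⟨Sum.inl ∘ c.1, Sum.inl_strictMono.comp c.2.1,
        c.2.2.imp fun i hi => by simp [hi]⟩ :
        {c : Fin (k + 1) → α ⊕ β // StrictMono c ∧ ∃ i, c i = Sum.inl a}))
    ⟨?_, ?_⟩)).symm
  · rintro ⟨c, hc⟩ ⟨c', hc'⟩ hcc
    simp only [Subtype.mk.injEq] at hcc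
    exact Subtype.ext (funext fun i => Sum.inl_injective (congrFun hcc i))
  · rintro ⟨c, hc, i, hi⟩
    rcases strictMono_sum_cases hc with ⟨d, rfl⟩ | ⟨d, rfl⟩
    · refine ⟨⟨d, strictMono_of_inl_comp hc, i, ?_⟩, rfl⟩
      exact Sum.inl_injective hi
    · exact absurd hi (by simp)

lemma card_chains_through_inr (k : ℕ) (b : β) :
    Nat.card {c : Fin (k + 1) → α ⊕ β // StrictMono c ∧ ∃ i, c i = Sum.inr b}
      = Nat.card {c : Fin (k + 1) → β // StrictMono c ∧ ∃ i, c i = b} := by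
  refine (Nat.card_congr (Equiv.ofBijective
    (fun c : {c : Fin (k + 1) → β // StrictMono c ∧ ∃ i, c i = b} =>
      (⟨Sum.inr ∘ c.1, Sum.inr_strictMono.comp c.2.1,
        c.2.2.imp fun i hi => by simp [hi]⟩ :
        {c : Fin (k + 1) → α ⊕ β // StrictMono c ∧ ∃ i, c i = Sum.inr b}))
    ⟨?_, ?_⟩)).symm
  · rintro ⟨c, hc⟩ ⟨c', hc'⟩ hcc
    simp only [Subtype.mk.injEq] at hcc
    exact Subtype.ext (funext fun i => Sum.inr_injective (congrFun hcc i))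
  · rintro ⟨c, hc, i, hi⟩
    rcases strictMono_sum_cases hc with ⟨d, rfl⟩ | ⟨d, rfl⟩
    · exact absurd hi (by simp)
    · refine ⟨⟨d, strictMono_of_inr_comp hc, i, ?_⟩, rfl⟩
      exact Sum.inr_injective hi

lemma card_chains_through_eq_zero {γ : Type*} [Finite γ] [PartialOrder γ] (k : ℕ)
    (h : Nat.card {c : Fin (k + 1) → γ // StrictMono c} = 0) (a : γ) :
    Nat.card {c : Fin (k + 1) → γ // StrictMono c ∧ ∃ i, c i = a} = 0 := by
  have hE : IsEmpty {c : Fin (k + 1) → γ // StrictMono c} := by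
    rcases Nat.card_eq_zero.1 h with h' | h'
    · exact h'
    · exact absurd h' (not_infinite_iff_finite.2 inferInstance)
  haveI : IsEmpty {c : Fin (k + 1) → γ // StrictMono c ∧ ∃ i, c i = a} :=
    ⟨fun c => hE.false ⟨c.1, c.2.1⟩⟩
  exact Nat.card_of_isEmpty

/-! #### Maximal chains in a disjoint union -/

lemma mem_inl_of_chain {C : Set (α ⊕ β)} (hC : IsChain (· ≤ ·) C) {a : α}
    (ha : Sum.inl a ∈ C) {z : α ⊕ β} (hz : z ∈ C) : ∃ x, z = Sum.inl x := by
  obtain (x | x) := z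
  · exact ⟨x, rfl⟩
  · rcases hC hz ha (by simp) with h' | h'
    · exact absurd h' Sum.not_inr_le_inl
    · exact absurd h' Sum.not_inl_le_inr

lemma mem_inr_of_chain {C : Set (α ⊕ β)} (hC : IsChain (· ≤ ·) C) {b : β}
    (hb : Sum.inr b ∈ C) {z : α ⊕ β} (hz : z ∈ C) : ∃ x, z = Sum.inr x := by
  obtain (x | x) := z
  · rcases hC hz hb (by simp) with h' | h'
    · exact absurd h' Sum.not_inl_le_inr
    · exact absurd h' Sum.not_inr_le_inl
  · exact ⟨x, rfl⟩

lemma isChain_image_inl {D : Set α} (hD : IsChain (· ≤ ·) D) :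
    IsChain (· ≤ ·) (Sum.inl '' D : Set (α ⊕ β)) := by
  rintro _ ⟨x, hx, rfl⟩ _ ⟨y, hy, rfl⟩ hne
  rcases hD hx hy (fun h => hne (by rw [h])) with h | h
  · exact Or.inl (Sum.inl_le_inl_iff.2 h)
  · exact Or.inr (Sum.inl_le_inl_iff.2 h)

lemma isChain_image_inr {D : Set β} (hD : IsChain (· ≤ ·) D) :
    IsChain (· ≤ ·) (Sum.inr '' D : Set (α ⊕ β)) := by
  rintro _ ⟨x, hx, rfl⟩ _ ⟨y, hy, rfl⟩ hne
  rcases hD hx hy (fun h => hne (by rw [h])) with h | h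
  · exact Or.inl (Sum.inr_le_inr_iff.2 h)
  · exact Or.inr (Sum.inr_le_inr_iff.2 h)

lemma isChain_preimage_inl {C : Set (α ⊕ β)} (hC : IsChain (· ≤ ·) C) :
    IsChain (· ≤ ·) (Sum.inl ⁻¹' C : Set α) := by
  intro x hx y hy hxy
  rcases hC hx hy (fun h => hxy (Sum.inl_injective h)) with h | h
  · exact Or.inl (Sum.inl_le_inl_iff.1 h)
  · exact Or.inr (Sum.inl_le_inl_iff.1 h)

lemma isChain_preimage_inr {C : Set (α ⊕ β)} (hC : IsChain (· ≤ ·) C) :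
    IsChain (· ≤ ·) (Sum.inr ⁻¹' C : Set β) := by
  intro x hx y hy hxy
  rcases hC hx hy (fun h => hxy (Sum.inr_injective h)) with h | h
  · exact Or.inl (Sum.inr_le_inr_iff.1 h)
  · exact Or.inr (Sum.inr_le_inr_iff.1 h)

lemma isMaxChain_image_inl {D : Set α} (hD : IsMaxChain (· ≤ ·) D) (hne : D.Nonempty) :
    IsMaxChain (· ≤ ·) (Sum.inl '' D : Set (α ⊕ β)) := by
  refine ⟨isChain_image_inl hD.1, ?_⟩
  intro t ht hsub
  obtain ⟨a, ha⟩ := hne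
  have haim : Sum.inl a ∈ t := hsub ⟨a, ha, rfl⟩
  have hDD' : D ⊆ Sum.inl ⁻¹' t := fun x hx => hsub ⟨x, hx, rfl⟩
  have hDeq : D = Sum.inl ⁻¹' t := hD.2 (isChain_preimage_inl ht) hDD'
  refine Set.Subset.antisymm hsub ?_
  intro z hz
  obtain ⟨x, rfl⟩ := mem_inl_of_chain ht haim hz
  exact ⟨x, hDeq ▸ hz, rfl⟩

lemma isMaxChain_image_inr {D : Set β} (hD : IsMaxChain (· ≤ ·) D) (hne : D.Nonempty) :
    IsMaxChain (· ≤ ·) (Sum.inr '' D : Set (α ⊕ β)) := by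
  refine ⟨isChain_image_inr hD.1, ?_⟩
  intro t ht hsub
  obtain ⟨a, ha⟩ := hne
  have haim : Sum.inr a ∈ t := hsub ⟨a, ha, rfl⟩
  have hDD' : D ⊆ Sum.inr ⁻¹' t := fun x hx => hsub ⟨x, hx, rfl⟩
  have hDeq : D = Sum.inr ⁻¹' t := hD.2 (isChain_preimage_inr ht) hDD'
  refine Set.Subset.antisymm hsub ?_
  intro z hz
  obtain ⟨x, rfl⟩ := mem_inr_of_chain ht haim hz
  exact ⟨x, hDeq ▸ hz, rfl⟩

lemma maxChain_inl_decomp {C : Set (α ⊕ β)} (hC : IsMaxChain (· ≤ ·) C) {a : α}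
    (ha : Sum.inl a ∈ C) :
    IsMaxChain (· ≤ ·) (Sum.inl ⁻¹' C : Set α) ∧ C = Sum.inl '' (Sum.inl ⁻¹' C) := by
  have himg : C = Sum.inl '' (Sum.inl ⁻¹' C) := by
    refine Set.Subset.antisymm ?_ ?_
    · intro z hz
      obtain ⟨x, rfl⟩ := mem_inl_of_chain hC.1 ha hz
      exact ⟨x, hz, rfl⟩
    · rintro _ ⟨x, hx, rfl⟩; exact hx
  refine ⟨⟨isChain_preimage_inl hC.1, ?_⟩, himg⟩
  intro t ht hsub
  have h2 : C ⊆ Sum.inl '' t := himg ▸ Set.image_mono hsub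
  have h3 : C = Sum.inl '' t := hC.2 (isChain_image_inl ht) h2
  refine Set.Subset.antisymm hsub ?_
  intro x hx
  show Sum.inl x ∈ C
  rw [h3]
  exact ⟨x, hx, rfl⟩

lemma maxChain_inr_decomp {C : Set (α ⊕ β)} (hC : IsMaxChain (· ≤ ·) C) {b : β}
    (hb : Sum.inr b ∈ C) :
    IsMaxChain (· ≤ ·) (Sum.inr ⁻¹' C : Set β) ∧ C = Sum.inr '' (Sum.inr ⁻¹' C) := by
  have himg : C = Sum.inr '' (Sum.inr ⁻¹' C) := by
    refine Set.Subset.antisymm ?_ ?_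
    · intro z hz
      obtain ⟨x, rfl⟩ := mem_inr_of_chain hC.1 hb hz
      exact ⟨x, hz, rfl⟩
    · rintro _ ⟨x, hx, rfl⟩; exact hx
  refine ⟨⟨isChain_preimage_inr hC.1, ?_⟩, himg⟩
  intro t ht hsub
  have h2 : C ⊆ Sum.inr '' t := himg ▸ Set.image_mono hsub
  have h3 : C = Sum.inr '' t := hC.2 (isChain_image_inr ht) h2
  refine Set.Subset.antisymm hsub ?_
  intro x hx
  show Sum.inr x ∈ C
  rw [h3]
  exact ⟨x, hx, rfl⟩

lemma card_maxchain_through_inl (a : α) :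
    Nat.card {C : Set (α ⊕ β) // IsMaxChain (· ≤ ·) C ∧ Sum.inl a ∈ C}
      = Nat.card {C : Set α // IsMaxChain (· ≤ ·) C ∧ a ∈ C} := by
  refine (Nat.card_congr (Equiv.ofBijective
    (fun D : {C : Set α // IsMaxChain (· ≤ ·) C ∧ a ∈ C} =>
      (⟨Sum.inl '' D.1, isMaxChain_image_inl D.2.1 ⟨a, D.2.2⟩, ⟨a, D.2.2, rfl⟩⟩ :
        {C : Set (α ⊕ β) // IsMaxChain (· ≤ ·) C ∧ Sum.inl a ∈ C}))
    ⟨?_, ?_⟩)).symm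
  · rintro ⟨D, hD⟩ ⟨D', hD'⟩ hDD
    simp only [Subtype.mk.injEq] at hDD
    exact Subtype.ext (Set.image_injective.2 Sum.inl_injective hDD)
  · rintro ⟨C, hC, haC⟩
    obtain ⟨hmax, himg⟩ := maxChain_inl_decomp hC haC
    exact ⟨⟨Sum.inl ⁻¹' C, hmax, haC⟩, Subtype.ext himg.symm⟩

lemma card_maxchain_through_inr (b : β) :
    Nat.card {C : Set (α ⊕ β) // IsMaxChain (· ≤ ·) C ∧ Sum.inr b ∈ C}
      = Nat.card {C : Set β // IsMaxChain (· ≤ ·) C ∧ b ∈ C} := by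
  refine (Nat.card_congr (Equiv.ofBijective
    (fun D : {C : Set β // IsMaxChain (· ≤ ·) C ∧ b ∈ C} =>
      (⟨Sum.inr '' D.1, isMaxChain_image_inr D.2.1 ⟨b, D.2.2⟩, ⟨b, D.2.2, rfl⟩⟩ :
        {C : Set (α ⊕ β) // IsMaxChain (· ≤ ·) C ∧ Sum.inr b ∈ C}))
    ⟨?_, ?_⟩)).symm
  · rintro ⟨D, hD⟩ ⟨D', hD'⟩ hDD
    simp only [Subtype.mk.injEq] at hDD
    exact Subtype.ext (Set.image_injective.2 Sum.inr_injective hDD)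
  · rintro ⟨C, hC, hbC⟩
    obtain ⟨hmax, himg⟩ := maxChain_inr_decomp hC hbC
    exact ⟨⟨Sum.inr ⁻¹' C, hmax, hbC⟩, Subtype.ext himg.symm⟩

lemma card_maxchain_pairs_sum [Finite α] [Finite β] :
    Nat.card {Cq : Set (α ⊕ β) × (α ⊕ β) // IsMaxChain (· ≤ ·) Cq.1 ∧ Cq.2 ∈ Cq.1}
      = Nat.card {Cq : Set α × α // IsMaxChain (· ≤ ·) Cq.1 ∧ Cq.2 ∈ Cq.1}
        + Nat.card {Cq : Set β × β // IsMaxChain (· ≤ ·) Cq.1 ∧ Cq.2 ∈ Cq.1} := by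
  rw [← Nat.card_sum]
  refine (Nat.card_congr (Equiv.ofBijective
    (Sum.elim
      (fun D : {Cq : Set α × α // IsMaxChain (· ≤ ·) Cq.1 ∧ Cq.2 ∈ Cq.1} =>
        (⟨(Sum.inl '' D.1.1, Sum.inl D.1.2),
          isMaxChain_image_inl D.2.1 ⟨D.1.2, D.2.2⟩, ⟨D.1.2, D.2.2, rfl⟩⟩ :
          {Cq : Set (α ⊕ β) × (α ⊕ β) // IsMaxChain (· ≤ ·) Cq.1 ∧ Cq.2 ∈ Cq.1}))
      (fun D : {Cq : Set β × β // IsMaxChain (· ≤ ·) Cq.1 ∧ Cq.2 ∈ Cq.1} =>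
        (⟨(Sum.inr '' D.1.1, Sum.inr D.1.2),
          isMaxChain_image_inr D.2.1 ⟨D.1.2, D.2.2⟩, ⟨D.1.2, D.2.2, rfl⟩⟩ :
          {Cq : Set (α ⊕ β) × (α ⊕ β) // IsMaxChain (· ≤ ·) Cq.1 ∧ Cq.2 ∈ Cq.1})))
    ⟨?_, ?_⟩)).symm
  · rintro (⟨⟨D, p⟩, hD⟩ | ⟨⟨D, p⟩, hD⟩) (⟨⟨D', p'⟩, hD'⟩ | ⟨⟨D', p'⟩, hD'⟩) hDD <;>
      simp only [Sum.elim_inl, Sum.elim_inr, Subtype.mk.injEq, Prod.mk.injEq] at hDD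
    · refine congrArg Sum.inl (Subtype.ext (Prod.ext ?_ ?_))
      · exact Set.image_injective.2 Sum.inl_injective hDD.1
      · exact Sum.inl_injective hDD.2
    · exact absurd hDD.2 (by simp)
    · exact absurd hDD.2 (by simp)
    · refine congrArg Sum.inr (Subtype.ext (Prod.ext ?_ ?_))
      · exact Set.image_injective.2 Sum.inr_injective hDD.1
      · exact Sum.inr_injective hDD.2
  · rintro ⟨⟨C, z⟩, hC, hz⟩
    obtain (a | b) := z
    · obtain ⟨hmax, himg⟩ := maxChain_inl_decomp hC hz
      exact ⟨Sum.inl ⟨(Sum.inl ⁻¹' C, a), hmax, hz⟩,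
        Subtype.ext (Prod.ext himg.symm rfl)⟩
    · obtain ⟨hmax, himg⟩ := maxChain_inr_decomp hC hz
      exact ⟨Sum.inr ⟨(Sum.inr ⁻¹' C, b), hmax, hz⟩,
        Subtype.ext (Prod.ext himg.symm rfl)⟩

lemma card_maxchain_through_eq_zero {γ : Type*} [Finite γ] [PartialOrder γ]
    (h : Nat.card {Cq : Set γ × γ // IsMaxChain (· ≤ ·) Cq.1 ∧ Cq.2 ∈ Cq.1} = 0) (a : γ) :
    Nat.card {C : Set γ // IsMaxChain (· ≤ ·) C ∧ a ∈ C} = 0 := by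
  have hE : IsEmpty {Cq : Set γ × γ // IsMaxChain (· ≤ ·) Cq.1 ∧ Cq.2 ∈ Cq.1} := by
    rcases Nat.card_eq_zero.1 h with h' | h'
    · exact h'
    · exact absurd h' (not_infinite_iff_finite.2 inferInstance)
  haveI : IsEmpty {C : Set γ // IsMaxChain (· ≤ ·) C ∧ a ∈ C} :=
    ⟨fun C => hE.false ⟨(C.1, a), C.2⟩⟩
  exact Nat.card_of_isEmpty

lemma card_maxchain_pairs_pos {γ : Type*} [Finite γ] [Nonempty γ] [PartialOrder γ] :
    0 < Nat.card {Cq : Set γ × γ // IsMaxChain (· ≤ ·) Cq.1 ∧ Cq.2 ∈ Cq.1} := by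
  obtain ⟨a⟩ := (inferInstance : Nonempty γ)
  have hch : IsChain (· ≤ ·) ({a} : Set γ) := by
    intro x hx y hy hxy
    rw [Set.mem_singleton_iff] at hx hy
    exact absurd (hx.trans hy.symm) hxy
  obtain ⟨M, hM, haM⟩ := hch.exists_maxChain
  haveI : Nonempty {Cq : Set γ × γ // IsMaxChain (· ≤ ·) Cq.1 ∧ Cq.2 ∈ Cq.1} :=
    ⟨⟨(M, a), hM, haM rfl⟩⟩
  exact Nat.card_pos

end Statement1Aux


section Statement1Side

variable {γ : Type*} [Finite γ] [PartialOrder γ]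

lemma maxchain_side_sum (hC : IsCDE γ) :
    (∑ᶠ a : γ, (Nat.card {C : Set γ // IsMaxChain (· ≤ ·) C ∧ a ∈ C} : ℝ) * ddeg a)
      = (Nat.card {Cq : Set γ × γ // IsMaxChain (· ≤ ·) Cq.1 ∧ Cq.2 ∈ Cq.1} : ℝ)
        * expect (uni γ) ddeg := by
  rcases eq_or_ne (Nat.card {Cq : Set γ × γ // IsMaxChain (· ≤ ·) Cq.1 ∧ Cq.2 ∈ Cq.1}) 0
    with h0 | h0
  · have hz := card_maxchain_through_eq_zero h0
    rw [h0]
    simp [hz]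
  · have h0' : (Nat.card {Cq : Set γ × γ // IsMaxChain (· ≤ ·) Cq.1 ∧ Cq.2 ∈ Cq.1} : ℝ) ≠ 0 :=
      Nat.cast_ne_zero.2 h0
    have h1 : (∑ᶠ a : γ, (Nat.card {C : Set γ // IsMaxChain (· ≤ ·) C ∧ a ∈ C} : ℝ) * ddeg a)
        / (Nat.card {Cq : Set γ × γ // IsMaxChain (· ≤ ·) Cq.1 ∧ Cq.2 ∈ Cq.1} : ℝ)
        = expect (uni γ) ddeg := by
      rw [← expect_div (fun a => (Nat.card {C : Set γ // IsMaxChain (· ≤ ·) C ∧ a ∈ C} : ℝ))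
        (Nat.card {Cq : Set γ × γ // IsMaxChain (· ≤ ·) Cq.1 ∧ Cq.2 ∈ Cq.1} : ℝ) ddeg]
      exact hC
    rw [← h1]
    field_simp

lemma chain_side_sum (hC : IsMCDE γ) (k : ℕ) :
    (∑ᶠ a : γ, (Nat.card {c : Fin (k + 1) → γ // StrictMono c ∧ ∃ i, c i = a} : ℝ) * ddeg a)
      = ((k : ℝ) + 1) * (Nat.card {c : Fin (k + 1) → γ // StrictMono c} : ℝ)
        * expect (uni γ) ddeg := by
  rcases eq_or_ne (Nat.card {c : Fin (k + 1) → γ // StrictMono c}) 0 with h0 | h0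
  · have hz := card_chains_through_eq_zero k h0
    rw [h0]
    simp [hz]
  · have hne : Nonempty {c : Fin (k + 1) → γ // StrictMono c} := (Nat.card_ne_zero.1 h0).1
    obtain ⟨⟨c, hc⟩⟩ := hne
    have hD : ((k : ℝ) + 1) * (Nat.card {c : Fin (k + 1) → γ // StrictMono c} : ℝ) ≠ 0 :=
      mul_ne_zero (by positivity) (Nat.cast_ne_zero.2 h0)
    have h1 : (∑ᶠ a : γ, (Nat.card {c : Fin (k + 1) → γ // StrictMono c ∧ ∃ i, c i = a} : ℝ)
          * ddeg a)
        / (((k : ℝ) + 1) * (Nat.card {c : Fin (k + 1) → γ // StrictMono c} : ℝ))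
        = expect (uni γ) ddeg := by
      rw [← expect_div
        (fun a => (Nat.card {c : Fin (k + 1) → γ // StrictMono c ∧ ∃ i, c i = a} : ℝ))
        (((k : ℝ) + 1) * (Nat.card {c : Fin (k + 1) → γ // StrictMono c} : ℝ)) ddeg]
      exact hC k ⟨c, hc⟩
    rw [← h1]
    field_simp

end Statement1Side

/-- Let `P` and `Q` be finite posets with the same edge density
`E(uni_P; ddeg) = E(uni_Q; ddeg)`.  If `P` and `Q` are both CDE then the disjoint union
`P + Q` is also CDE; similarly, if `P` and `Q` are both mCDE then `P + Q` is also mCDE. -/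
theorem statement1 (α β : Type*) [Finite α] [PartialOrder α] [Finite β] [PartialOrder β]
    (h : expect (uni α) ddeg = expect (uni β) ddeg) :
    (IsCDE α → IsCDE β → IsCDE (α ⊕ β)) ∧ (IsMCDE α → IsMCDE β → IsMCDE (α ⊕ β)) := by
  have huniS : Nonempty (α ⊕ β) → expect (uni (α ⊕ β)) ddeg = expect (uni α) ddeg := by
    intro hne
    have hpos : ((Nat.card α : ℝ) + (Nat.card β : ℝ)) ≠ 0 := by
      have h1 : 0 < Nat.card (α ⊕ β) := Nat.card_pos
      rw [Nat.card_sum] at h1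
      have h2 : (0 : ℝ) < ((Nat.card α + Nat.card β : ℕ) : ℝ) := by exact_mod_cast h1
      push_cast at h2
      exact h2.ne'
    rw [expect_uni_eq, finsum_sum_split, Nat.card_sum]
    simp only [ddeg_inl, ddeg_inr]
    rw [sum_ddeg_eq (γ := α), sum_ddeg_eq (γ := β), ← h]
    push_cast
    rw [div_eq_iff hpos]
    ring
  constructor
  · intro hA hB
    unfold IsCDE
    rcases isEmpty_or_nonempty (α ⊕ β) with hE | hNE
    · rw [expect_isEmpty, expect_isEmpty]
    · rw [huniS hNE]
      have key : expect (maxchainDist (α ⊕ β)) ddeg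
          = ((∑ᶠ a : α, (Nat.card {C : Set α // IsMaxChain (· ≤ ·) C ∧ a ∈ C} : ℝ) * ddeg a)
              + (∑ᶠ b : β, (Nat.card {C : Set β // IsMaxChain (· ≤ ·) C ∧ b ∈ C} : ℝ) * ddeg b))
            / ((Nat.card {Cq : Set α × α // IsMaxChain (· ≤ ·) Cq.1 ∧ Cq.2 ∈ Cq.1} : ℝ)
              + (Nat.card {Cq : Set β × β // IsMaxChain (· ≤ ·) Cq.1 ∧ Cq.2 ∈ Cq.1} : ℝ)) := by
        have h1 : expect (maxchainDist (α ⊕ β)) ddeg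
            = (∑ᶠ p : α ⊕ β,
                (Nat.card {C : Set (α ⊕ β) // IsMaxChain (· ≤ ·) C ∧ p ∈ C} : ℝ) * ddeg p)
              / (Nat.card {Cq : Set (α ⊕ β) × (α ⊕ β) //
                  IsMaxChain (· ≤ ·) Cq.1 ∧ Cq.2 ∈ Cq.1} : ℝ) :=
          expect_div _ _ _
        rw [h1, finsum_sum_split]
        congr 1
        · congr 1
          · exact finsum_congr fun a => by rw [card_maxchain_through_inl, ddeg_inl]
          · exact finsum_congr fun b => by rw [card_maxchain_through_inr, ddeg_inr]
        · rw [card_maxchain_pairs_sum]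
          push_cast
          ring
      rw [key]
      refine mix_eq (maxchain_side_sum hA) ?_ ?_
      · rw [maxchain_side_sum hB, ← h]
      · have hA0 : (0 : ℝ) ≤
            (Nat.card {Cq : Set α × α // IsMaxChain (· ≤ ·) Cq.1 ∧ Cq.2 ∈ Cq.1} : ℝ) :=
          Nat.cast_nonneg _
        have hB0 : (0 : ℝ) ≤
            (Nat.card {Cq : Set β × β // IsMaxChain (· ≤ ·) Cq.1 ∧ Cq.2 ∈ Cq.1} : ℝ) :=
          Nat.cast_nonneg _
        rcases hNE with ⟨(a | b)⟩
        · haveI : Nonempty α := ⟨a⟩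
          have h1 : (0 : ℝ) <
              (Nat.card {Cq : Set α × α // IsMaxChain (· ≤ ·) Cq.1 ∧ Cq.2 ∈ Cq.1} : ℝ) := by
            exact_mod_cast card_maxchain_pairs_pos (γ := α)
          positivity
        · haveI : Nonempty β := ⟨b⟩
          have h1 : (0 : ℝ) <
              (Nat.card {Cq : Set β × β // IsMaxChain (· ≤ ·) Cq.1 ∧ Cq.2 ∈ Cq.1} : ℝ) := by
            exact_mod_cast card_maxchain_pairs_pos (γ := β)
          positivity
  · intro hA hB k hex
    obtain ⟨c, hc⟩ := hex
    haveI hNE : Nonempty (α ⊕ β) := ⟨c 0⟩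
    rw [huniS hNE]
    have hMpos : (0 : ℝ) < (Nat.card {c : Fin (k + 1) → α // StrictMono c} : ℝ)
        + (Nat.card {c : Fin (k + 1) → β // StrictMono c} : ℝ) := by
      haveI : Nonempty {c : Fin (k + 1) → α ⊕ β // StrictMono c} := ⟨⟨c, hc⟩⟩
      have h1 : 0 < Nat.card {c : Fin (k + 1) → α ⊕ β // StrictMono c} := Nat.card_pos
      rw [card_chains_sum] at h1
      have h2 : (0 : ℝ) < ((Nat.card {c : Fin (k + 1) → α // StrictMono c}
          + Nat.card {c : Fin (k + 1) → β // StrictMono c} : ℕ) : ℝ) := by exact_mod_cast h1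
      push_cast at h2
      exact h2
    have key : expect (chainDist (α ⊕ β) k) ddeg
        = ((∑ᶠ a : α,
              (Nat.card {c : Fin (k + 1) → α // StrictMono c ∧ ∃ i, c i = a} : ℝ) * ddeg a)
            + (∑ᶠ b : β,
              (Nat.card {c : Fin (k + 1) → β // StrictMono c ∧ ∃ i, c i = b} : ℝ) * ddeg b))
          / (((k : ℝ) + 1) * ((Nat.card {c : Fin (k + 1) → α // StrictMono c} : ℝ)
            + (Nat.card {c : Fin (k + 1) → β // StrictMono c} : ℝ))) := by
      have h1 : expect (chainDist (α ⊕ β) k) ddeg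
          = (∑ᶠ p : α ⊕ β,
              (Nat.card {c : Fin (k + 1) → α ⊕ β // StrictMono c ∧ ∃ i, c i = p} : ℝ) * ddeg p)
            / (((k : ℝ) + 1)
              * (Nat.card {c : Fin (k + 1) → α ⊕ β // StrictMono c} : ℝ)) :=
        expect_div _ _ _
      rw [h1, finsum_sum_split]
      congr 1
      · congr 1
        · exact finsum_congr fun a => by rw [card_chains_through_inl, ddeg_inl]
        · exact finsum_congr fun b => by rw [card_chains_through_inr, ddeg_inr]
      · rw [card_chains_sum]
        push_cast
        ring
    rw [key, chain_side_sum hA k, chain_side_sum hB k, ← h]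
    have hD : ((k : ℝ) + 1) * ((Nat.card {c : Fin (k + 1) → α // StrictMono c} : ℝ)
        + (Nat.card {c : Fin (k + 1) → β // StrictMono c} : ℝ)) ≠ 0 :=
      mul_ne_zero (by positivity) hMpos.ne'
    rw [div_eq_iff hD]
    ring

end CDEPaper
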